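/- arXiv:2012.08310 — 2 statements merged into one kernel-verified Lean document; each statement's English description precedes it below -/
import Mathlib

section
/- (Theorem 4.1.) Every Cartan subalgebra of the Lie algebra g_k is abelian (commutative). -/
/-- The matrix `e_s` with `(e_s)_{i,j} = i` if `j = i + s - 1` and `0` otherwise. -/
def Emat (k s : ℕ) : Matrix (Fin k) (Fin k) ℂ :=
  fun i j => if (j : ℕ) + 1 = (i : ℕ) + s then ((i : ℕ) + 1 : ℂ) else 0

/-- `g_k = span_ℂ{e_1, …, e_k}`. -/
noncomputable def gkAlg (k : ℕ) : Submodule ℂ (Matrix (Fin k) (Fin k) ℂ) :=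
  Submodule.span ℂ (Emat k '' {s | 1 ≤ s ∧ s ≤ k})


/-- padded row-0 coordinate function -/
def rowc (k : ℕ) (X : Matrix (Fin k) (Fin k) ℂ) (n : ℕ) : ℂ :=
  if h : n < k then X ⟨0, Nat.pos_of_ne_zero (by omega)⟩ ⟨n, h⟩ else 0

lemma Emat_zero_of_gt (k u : ℕ) (h : k < u) : Emat k u = 0 := by
  ext i j
  simp only [Emat, Matrix.zero_apply, ite_eq_right_iff]
  intro hij
  omega

lemma Emat_mul (k s t : ℕ) :
    Emat k (s+1) * Emat k (t+1) =
      fun (i j : Fin k) => if (j : ℕ) + 1 = (i : ℕ) + s + t + 1 then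
        (((i:ℕ)+1 : ℂ) * ((i:ℕ)+s+1 : ℂ)) else 0 := by
  ext i j
  simp only [Matrix.mul_apply, Emat]
  by_cases h : (j : ℕ) + 1 = (i : ℕ) + s + t + 1
  · have hl : (i:ℕ) + s < k := by omega
    rw [Finset.sum_eq_single (⟨(i:ℕ)+s, hl⟩ : Fin k)]
    · simp only [h]
      rw [if_pos (by omega), if_pos (by omega)]
      push_cast; ring
    · intro b _ hb
      have : ¬ ((b : ℕ) + 1 = (i : ℕ) + (s+1)) := by
        intro hc
        exact hb (Fin.ext (by simp only [Fin.val_mk]; omega))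
      rw [if_neg this, zero_mul]
    · intro hc; exact absurd (Finset.mem_univ _) hc
  · rw [if_neg h]
    apply Finset.sum_eq_zero
    intro l _
    by_cases h1 : (l : ℕ) + 1 = (i : ℕ) + (s+1)
    · by_cases h2 : (j : ℕ) + 1 = (l : ℕ) + (t+1)
      · omega
      · rw [if_neg h2, mul_zero]
    · rw [if_neg h1, zero_mul]

lemma Emat_comm (k s t : ℕ) :
    Emat k (s+1) * Emat k (t+1) - Emat k (t+1) * Emat k (s+1) =
      ((s:ℂ) - (t:ℂ)) • Emat k (s+t+1) := by
  rw [Emat_mul, Emat_mul]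
  ext i j
  erw [Matrix.sub_apply]
  simp only [Matrix.sub_apply, Matrix.smul_apply, Emat, smul_eq_mul]
  by_cases h : (j : ℕ) + 1 = (i : ℕ) + s + t + 1
  · rw [if_pos h, if_pos (by omega), if_pos (by omega : (j:ℕ)+1 = (i:ℕ)+(s+t+1))]
    ring
  · rw [if_neg h, if_neg (by omega), if_neg (by omega : ¬ ((j:ℕ)+1 = (i:ℕ)+(s+t+1)))]
    ring

lemma kpos (k : ℕ) [NeZero k] : 0 < k := Nat.pos_of_ne_zero (NeZero.ne k)

lemma rowc_add (k : ℕ) (X Y : Matrix (Fin k) (Fin k) ℂ) (n : ℕ) :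
    rowc k (X + Y) n = rowc k X n + rowc k Y n := by
  unfold rowc; split_ifs
  · rfl
  · simp

lemma rowc_smul (k : ℕ) (a : ℂ) (X : Matrix (Fin k) (Fin k) ℂ) (n : ℕ) :
    rowc k (a • X) n = a * rowc k X n := by
  unfold rowc; split_ifs
  · rfl
  · simp

lemma entry_eq (k : ℕ) [NeZero k] {X : Matrix (Fin k) (Fin k) ℂ} (hX : X ∈ gkAlg k)
    (i j : Fin k) :
    X i j = if (i : ℕ) ≤ (j : ℕ) then ((i:ℕ)+1 : ℂ) * rowc k X ((j:ℕ) - (i:ℕ)) else 0 := by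
  induction hX using Submodule.span_induction with
  | mem x hx =>
    obtain ⟨s, ⟨hs1, hs2⟩, rfl⟩ := hx
    simp only [Emat, rowc]
    have h0 : (0 : Fin k) = ⟨0, kpos k⟩ := rfl
    by_cases h : (j:ℕ) + 1 = (i:ℕ) + s
    · rw [if_pos h, if_pos (by omega)]
      rw [dif_pos (by omega : (j:ℕ) - (i:ℕ) < k)]
      rw [if_pos (by omega)]
      push_cast; ring
    · rw [if_neg h]
      by_cases h2 : (i:ℕ) ≤ (j:ℕ)
      · rw [if_pos h2]
        rw [dif_pos (by omega : (j:ℕ) - (i:ℕ) < k)]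
        rw [if_neg (by omega), mul_zero]
      · rw [if_neg h2]
  | zero => simp [rowc]
  | add x y hx hy ihx ihy =>
    simp only [Matrix.add_apply, ihx, ihy, rowc_add]
    split_ifs <;> ring
  | smul a x hx ihx =>
    simp only [Matrix.smul_apply, ihx, rowc_smul, smul_eq_mul]
    split_ifs <;> ring

lemma eq_zero_of_row (k : ℕ) [NeZero k] {X : Matrix (Fin k) (Fin k) ℂ} (hX : X ∈ gkAlg k)
    (h : ∀ j : Fin k, X ⟨0, kpos k⟩ j = 0) : X = 0 := by
  ext i j
  rw [entry_eq k hX i j]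
  simp only [rowc, Matrix.zero_apply]
  split_ifs with h1 h2
  · rw [h _, mul_zero]
  · rw [mul_zero]
  · rfl

lemma bracket_mem (k : ℕ) {X Y : Matrix (Fin k) (Fin k) ℂ} (hX : X ∈ gkAlg k)
    (hY : Y ∈ gkAlg k) : X * Y - Y * X ∈ gkAlg k := by
  induction hX, hY using Submodule.span_induction₂ with
  | mem_mem x y hx hy =>
    obtain ⟨s, ⟨hs1, hs2⟩, rfl⟩ := hx
    obtain ⟨t, ⟨ht1, ht2⟩, rfl⟩ := hy
    obtain ⟨s', rfl⟩ : ∃ s', s = s' + 1 := ⟨s - 1, by omega⟩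
    obtain ⟨t', rfl⟩ : ∃ t', t = t' + 1 := ⟨t - 1, by omega⟩
    rw [Emat_comm]
    by_cases h : s' + t' + 1 ≤ k
    · exact Submodule.smul_mem _ _ (Submodule.subset_span ⟨s'+t'+1, ⟨by omega, h⟩, rfl⟩)
    · rw [Emat_zero_of_gt k _ (by omega), smul_zero]
      exact Submodule.zero_mem _
  | zero_left y hy => simp
  | zero_right x hx => simp
  | add_left x y z hx hy hz h1 h2 =>
    have : (x + y) * z - z * (x + y) = (x * z - z * x) + (y * z - z * y) := by noncomm_ring
    rw [this]; exact Submodule.add_mem _ h1 h2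
  | add_right x y z hx hy hz h1 h2 =>
    have : x * (y + z) - (y + z) * x = (x * y - y * x) + (x * z - z * x) := by noncomm_ring
    rw [this]; exact Submodule.add_mem _ h1 h2
  | smul_left r x y hx hy h1 =>
    have : (r • x) * y - y * (r • x) = r • (x * y - y * x) := by
      rw [smul_mul_assoc, mul_smul_comm, smul_sub]
    rw [this]; exact Submodule.smul_mem _ _ h1
  | smul_right r x y hx hy h1 =>
    have : x * (r • y) - (r • y) * x = r • (x * y - y * x) := by
      rw [smul_mul_assoc, mul_smul_comm, smul_sub]
    rw [this]; exact Submodule.smul_mem _ _ h1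

lemma rowc_fin (k : ℕ) [NeZero k] (X : Matrix (Fin k) (Fin k) ℂ) (j : Fin k) :
    rowc k X (j : ℕ) = X ⟨0, kpos k⟩ j := by
  unfold rowc
  rw [dif_pos j.isLt]

lemma mulrow (k : ℕ) [NeZero k] {Y : Matrix (Fin k) (Fin k) ℂ}
    (X : Matrix (Fin k) (Fin k) ℂ) (hY : Y ∈ gkAlg k) (j : Fin k) :
    (X * Y) ⟨0, kpos k⟩ j = ∑ l : Fin k, X ⟨0, kpos k⟩ l *
      (if (l:ℕ) ≤ (j:ℕ) then ((l:ℕ)+1 : ℂ) * rowc k Y ((j:ℕ)-(l:ℕ)) else 0) := by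
  rw [Matrix.mul_apply]
  exact Finset.sum_congr rfl (fun l _ => by rw [entry_eq k hY l j])

lemma rowc_van (k : ℕ) [NeZero k] {Y : Matrix (Fin k) (Fin k) ℂ} {m : ℕ}
    (hv : ∀ j : Fin k, (j:ℕ) < m → Y ⟨0, kpos k⟩ j = 0) :
    ∀ n, n < m → rowc k Y n = 0 := by
  intro n hn
  unfold rowc
  split_ifs with h
  · exact hv ⟨n, h⟩ hn
  · rfl

lemma brak_lt (k : ℕ) [NeZero k] {X Y : Matrix (Fin k) (Fin k) ℂ}
    (hX : X ∈ gkAlg k) (hY : Y ∈ gkAlg k) {m : ℕ}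
    (hv : ∀ j : Fin k, (j:ℕ) < m → Y ⟨0, kpos k⟩ j = 0)
    (j : Fin k) (hj : (j:ℕ) < m) :
    (X * Y - Y * X) ⟨0, kpos k⟩ j = 0 := by
  rw [Matrix.sub_apply, mulrow k X hY j, mulrow k Y hX j]
  rw [Finset.sum_eq_zero, Finset.sum_eq_zero, sub_zero]
  · intro l _
    by_cases h : (l:ℕ) ≤ (j:ℕ)
    · rw [hv l (by omega), zero_mul]
    · rw [if_neg h, mul_zero]
  · intro l _
    by_cases h : (l:ℕ) ≤ (j:ℕ)
    · rw [if_pos h, rowc_van k hv _ (by omega), mul_zero, mul_zero]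
    · rw [if_neg h, mul_zero]

lemma brak_eq (k : ℕ) [NeZero k] {X Y : Matrix (Fin k) (Fin k) ℂ}
    (hX : X ∈ gkAlg k) (hY : Y ∈ gkAlg k) {m : ℕ}
    (hv : ∀ j : Fin k, (j:ℕ) < m → Y ⟨0, kpos k⟩ j = 0)
    (j : Fin k) (hj : (j:ℕ) = m) :
    (X * Y - Y * X) ⟨0, kpos k⟩ j =
      -(m:ℂ) * X ⟨0, kpos k⟩ ⟨0, kpos k⟩ * Y ⟨0, kpos k⟩ j := by
  rw [Matrix.sub_apply, mulrow k X hY j, mulrow k Y hX j]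
  rw [Finset.sum_eq_single (⟨0, kpos k⟩ : Fin k), Finset.sum_eq_single j]
  · have h1 : ((⟨0, kpos k⟩ : Fin k) : ℕ) = 0 := rfl
    rw [if_pos (by omega), if_pos (by omega)]
    have e1 : (j:ℕ) - ((⟨0, kpos k⟩ : Fin k) : ℕ) = (j:ℕ) := by omega
    have e2 : (j:ℕ) - (j:ℕ) = ((⟨0, kpos k⟩ : Fin k) : ℕ) := by omega
    rw [e1, e2, rowc_fin, rowc_fin]
    rw [h1, hj]
    push_cast
    ring
  · intro b _ hb
    by_cases h : (b:ℕ) ≤ (j:ℕ)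
    · rw [hv b (by
        have : (b:ℕ) ≠ (j:ℕ) := fun hc => hb (Fin.ext hc)
        omega), zero_mul]
    · rw [if_neg h, mul_zero]
  · intro h; exact absurd (Finset.mem_univ _) h
  · intro b _ hb
    by_cases h : (b:ℕ) ≤ (j:ℕ)
    · have hbne : (b:ℕ) ≠ 0 := fun hc => hb (Fin.ext hc)
      rw [if_pos h, rowc_van k hv _ (by omega), mul_zero, mul_zero]
    · rw [if_neg h, mul_zero]
  · intro h; exact absurd (Finset.mem_univ _) h

lemma smul_mul_smul_self_comm (α β : ℂ) {n : ℕ} (M : Matrix (Fin n) (Fin n) ℂ) :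
    (α • M) * (β • M) = (β • M) * (α • M) := by
  rw [smul_mul_assoc, smul_mul_assoc, mul_smul_comm, mul_smul_comm,
    smul_smul, smul_smul, mul_comm]

/-- The lower central series of a subspace `H` with respect to the commutator bracket. -/
noncomputable def lcsOf (k : ℕ) (H : Submodule ℂ (Matrix (Fin k) (Fin k) ℂ)) :
    ℕ → Submodule ℂ (Matrix (Fin k) (Fin k) ℂ)
  | 0 => H
  | n + 1 => Submodule.span ℂ {z | ∃ x ∈ H, ∃ y ∈ lcsOf k H n, z = x * y - y * x}

/-- Every Cartan subalgebra of `g_k` — i.e. every bracket-closed subspace `H ⊆ g_k`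
that is nilpotent (lower central series reaches zero) and equal to its own normalizer
in `g_k` — is abelian. -/
theorem cartan_subalgebras_abelian (k : ℕ) [NeZero k]
    (H : Submodule ℂ (Matrix (Fin k) (Fin k) ℂ))
    (hsub : (H : Set (Matrix (Fin k) (Fin k) ℂ)) ⊆ (gkAlg k : Set _))
    (hclosed : ∀ x ∈ H, ∀ y ∈ H, x * y - y * x ∈ H)
    (hnilp : ∃ N : ℕ, lcsOf k H N = ⊥)
    (hself : {x | x ∈ gkAlg k ∧ ∀ y ∈ H, x * y - y * x ∈ H}
        = (H : Set (Matrix (Fin k) (Fin k) ℂ))) :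
    ∀ x ∈ H, ∀ y ∈ H, x * y = y * x := by
  classical
  set i0 : Fin k := ⟨0, kpos k⟩ with hi0
  by_cases hcase : ∀ x ∈ H, x i0 i0 = 0
  · -- Case 1: contradiction with self-normalizing
    exfalso
    let P : ℕ → Prop := fun d => ∀ X ∈ gkAlg k,
      (∀ j : Fin k, (j:ℕ) < d → X i0 j = 0) → X ∈ H
    have hP0 : ¬ P 0 := by
      intro hp
      have he : Emat k 1 ∈ gkAlg k :=
        Submodule.subset_span ⟨1, ⟨le_refl 1, kpos k⟩, rfl⟩
      have hmem := hp (Emat k 1) he (fun j hj => absurd hj (by omega))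
      have h00 := hcase _ hmem
      simp [Emat, hi0] at h00
    have hPk : P k := by
      intro X hX hv
      rw [eq_zero_of_row k hX (fun j => hv j j.isLt)]
      exact H.zero_mem
    have key : ∃ d, ¬ P d ∧ P (d+1) := by
      by_contra hc
      push_neg at hc
      have hall : ∀ d, ¬ P d := fun d => Nat.rec hP0 (fun n ih => hc n ih) d
      exact hall k hPk
    obtain ⟨d, hd1, hd2⟩ := key
    have : ∃ w, w ∈ gkAlg k ∧ (∀ j : Fin k, (j:ℕ) < d → w i0 j = 0) ∧ w ∉ H := by
      by_contra hc
      push_neg at hc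
      exact hd1 (fun X hX hv => hc X hX hv)
    obtain ⟨w, hw1, hw2, hw3⟩ := this
    apply hw3
    have hmem : w ∈ {x | x ∈ gkAlg k ∧ ∀ y ∈ H, x * y - y * x ∈ H} := by
      refine ⟨hw1, ?_⟩
      intro y hy
      have hyg := hsub hy
      apply hd2 _ (bracket_mem k hw1 hyg)
      intro j hj
      have heq : (w * y - y * w) i0 j = -((y * w - w * y) i0 j) := by
        simp [Matrix.sub_apply]
      rcases Nat.lt_succ_iff_lt_or_eq.mp hj with h | h
      · rw [heq, brak_lt k hyg hw1 hw2 j h, neg_zero]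
      · rw [heq, brak_eq k hyg hw1 hw2 j h, hcase y hy]
        ring
    rw [hself] at hmem
    exact hmem
  · -- Case 2: exists x with nonzero e₁-coefficient
    push_neg at hcase
    obtain ⟨x0, hx0H, hx00⟩ := hcase
    set x : Matrix (Fin k) (Fin k) ℂ := (x0 i0 i0)⁻¹ • x0 with hxdef
    have hxH : x ∈ H := H.smul_mem _ hx0H
    have hx1 : x i0 i0 = 1 := by
      rw [hxdef, Matrix.smul_apply, smul_eq_mul, inv_mul_cancel₀ hx00]
    have hrep : ∀ y ∈ H, y = (y i0 i0) • x := by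
      intro y hy
      have hzH : y - (y i0 i0) • x ∈ H := H.sub_mem hy (H.smul_mem _ hxH)
      set z : Matrix (Fin k) (Fin k) ℂ := y - (y i0 i0) • x with hzdef
      have hz00 : z i0 i0 = 0 := by
        rw [hzdef, Matrix.sub_apply, Matrix.smul_apply, hx1, smul_eq_mul,
          mul_one, sub_self]
      suffices hzz : z = 0 by
        have := sub_eq_zero.mp hzz
        exact this
      by_contra hzne
      have hex : ∃ n, ∃ h : n < k, z i0 ⟨n, h⟩ ≠ 0 := by
        by_contra hc
        push_neg at hc
        refine hzne (eq_zero_of_row k (hsub hzH) (fun j => ?_))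
        have := hc (j:ℕ) j.isLt
        exact this
      set m := Nat.find hex with hmdef
      obtain ⟨hmk, hmne⟩ := Nat.find_spec hex
      have hmin : ∀ j : Fin k, (j:ℕ) < m → z i0 j = 0 := by
        intro j hj
        by_contra hne
        exact Nat.find_min hex hj ⟨j.isLt, by simpa using hne⟩
      have hm0 : m ≠ 0 := by
        intro h0
        apply hmne
        have : (⟨m, hmk⟩ : Fin k) = i0 := Fin.ext (by simp [h0, hi0])
        rw [this]
        exact hz00
      obtain ⟨N, hN⟩ := hnilp
      let Z : ℕ → Matrix (Fin k) (Fin k) ℂ :=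
        fun n => Nat.rec z (fun _ w => x * w - w * x) n
      have hZ : ∀ n, Z n ∈ H ∧ Z n ∈ lcsOf k H n ∧
          (∀ j : Fin k, (j:ℕ) < m → Z n i0 j = 0) ∧
          Z n i0 ⟨m, hmk⟩ = (-(m:ℂ))^n * z i0 ⟨m, hmk⟩ := by
        intro n
        induction n with
        | zero =>
          refine ⟨hzH, ?_, hmin, by
            show z i0 ⟨m, hmk⟩ = (-(m:ℂ))^0 * z i0 ⟨m, hmk⟩
            rw [pow_zero, one_mul]⟩
          simp only [lcsOf]
          exact hzH
        | succ n ih =>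
          obtain ⟨ih1, ih2, ih3, ih4⟩ := ih
          have hZg := hsub ih1
          have hstep : Z (n+1) = x * Z n - Z n * x := rfl
          refine ⟨by rw [hstep]; exact hclosed x hxH _ ih1, ?_, ?_, ?_⟩
          · rw [hstep]
            simp only [lcsOf]
            exact Submodule.subset_span ⟨x, hxH, Z n, ih2, rfl⟩
          · intro j hj
            rw [hstep]
            exact brak_lt k (hsub hxH) hZg ih3 j hj
          · rw [hstep, brak_eq k (hsub hxH) hZg ih3 ⟨m, hmk⟩ rfl, hx1, ih4]
            ring
      have h1 := (hZ N).2.1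
      rw [hN] at h1
      have hZ0 : Z N = 0 := by simpa using h1
      have h2 := (hZ N).2.2.2
      rw [hZ0] at h2
      simp only [Matrix.zero_apply] at h2
      have hne : (-(m:ℂ))^N * z i0 ⟨m, hmk⟩ ≠ 0 :=
        mul_ne_zero (pow_ne_zero _ (neg_ne_zero.mpr (Nat.cast_ne_zero.mpr hm0))) hmne
      exact hne h2.symm
    intro a ha b hb
    rw [hrep a ha, hrep b hb]
    exact smul_mul_smul_self_comm _ _ _
end

section
/- (Theorem 4.2 item 4 / Theorem 4.3 item 1, finite generation.) Let G_k act on the polynomial ring ℂ[x_1, …, x_k] — the coordinate ring of g_k with respect to the basis e_1, …, e_k — by (A·P)(x) = P(Ad(A⁻¹)(x)), where Ad(A)(y) = A y A⁻¹ and x ∈ g_k has coordinates (x_1, …, x_k). Then the subalgebra ℂ[g_k]^{G_k} of G_k-invariant polynomials is a finitely generated ℂ-algebra. -/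
/-- The matrix `M(a)` with `M(a)_{ij} = Σ_{s_1+⋯+s_i = j, s_l ≥ 1} a_{s_1} ⋯ a_{s_i}`. -/
noncomputable def Mmat (k : ℕ) (a : Fin k → ℂ) : Matrix (Fin k) (Fin k) ℂ :=
  fun i j =>
    ∑ s ∈ (Finset.Nat.antidiagonalTuple (i.val + 1) (j.val + 1)).filter
        (fun s => ∀ l, 0 < s l),
      ∏ l, (if h : 1 ≤ s l ∧ s l ≤ k then a ⟨s l - 1, by omega⟩ else 0)

/-- `G_k = { M(a) : a_1 ≠ 0 }`. -/
noncomputable def Gset (k : ℕ) [NeZero k] : Set (Matrix (Fin k) (Fin k) ℂ) :=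
  {A | ∃ a : Fin k → ℂ, a 0 ≠ 0 ∧ A = Mmat k a}

/-- The element of `g_k` with coordinates `c` in the basis `e_1, …, e_k`. -/
noncomputable def matOf (k : ℕ) (c : Fin k → ℂ) : Matrix (Fin k) (Fin k) ℂ :=
  ∑ s : Fin k, c s • Emat k (s.val + 1)

/-- The coordinates of `x ∈ g_k` in the basis `e_1, …, e_k` (read off the first row,
since `(e_s)_{1,j} = δ_{j,s}`). -/
def coordOf (k : ℕ) [NeZero k] (x : Matrix (Fin k) (Fin k) ℂ) : Fin k → ℂ :=
  fun s => x 0 s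

-- tuples with all parts positive summing to j+1 with i+1 parts are impossible for j < i
lemma Mmat_lower (k : ℕ) (a : Fin k → ℂ) {i j : Fin k} (h : (j : ℕ) < i) :
    Mmat k a i j = 0 := by
  unfold Mmat
  apply Finset.sum_eq_zero
  intro s hs
  simp only [Finset.mem_filter, Finset.Nat.mem_antidiagonalTuple] at hs
  obtain ⟨hsum, hpos⟩ := hs
  exfalso
  have : (i : ℕ) + 1 ≤ ∑ l, s l := by
    calc (i:ℕ) + 1 = ∑ _l : Fin ((i:ℕ)+1), 1 := by simp
    _ ≤ ∑ l, s l := Finset.sum_le_sum (fun l _ => hpos l)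
  omega

lemma prod_eq_zero_of_ne_one (k : ℕ) (a : Fin k → ℂ) {n : ℕ} {s : Fin n → ℕ}
    (ha : ∀ i : Fin k, (i:ℕ) ≠ 0 → a i = 0) {l : Fin n} (hl : s l ≠ 1) :
    (∏ l, (if h : 1 ≤ s l ∧ s l ≤ k then a ⟨s l - 1, by omega⟩ else 0)) = 0 := by
  apply Finset.prod_eq_zero (Finset.mem_univ l)
  by_cases h : 1 ≤ s l ∧ s l ≤ k
  · rw [dif_pos h]
    exact ha _ (by simp; omega)
  · rw [dif_neg h]

lemma Mmat_single (k : ℕ) [NeZero k] (t : ℂ) :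
    Mmat k (fun i => if i = 0 then t else 0) = Matrix.diagonal (fun i : Fin k => t ^ ((i:ℕ)+1)) := by
  have hk : 1 ≤ k := Nat.one_le_iff_ne_zero.mpr (NeZero.ne k)
  have ha : ∀ i : Fin k, (i:ℕ) ≠ 0 → (fun i : Fin k => if i = 0 then t else 0) i = 0 := by
    intro i hi
    simp only []
    rw [if_neg (show ¬ i = 0 from fun h => hi (by simp [h]))]
  ext i j
  unfold Mmat
  rcases eq_or_ne i j with rfl | hij
  · rw [Matrix.diagonal_apply_eq]
    rw [Finset.sum_eq_single_of_mem (fun _ => 1)]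
    · rw [Finset.prod_congr rfl (fun l _ => dif_pos ⟨le_refl 1, hk⟩)]
      trans (∏ _l : Fin ((i:ℕ)+1), (fun i : Fin k => if i = 0 then t else 0) 0)
      · exact Finset.prod_congr rfl fun l _ => by simp
      · simp
    · simp [Finset.Nat.mem_antidiagonalTuple]
    · intro s hs hne
      obtain ⟨l, hl⟩ : ∃ l, s l ≠ 1 := by
        by_contra hc
        push_neg at hc
        exact hne (funext hc)
      exact prod_eq_zero_of_ne_one k _ ha hl
  · rw [Matrix.diagonal_apply_ne _ hij]
    apply Finset.sum_eq_zero
    intro s hs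
    simp only [Finset.mem_filter, Finset.Nat.mem_antidiagonalTuple] at hs
    obtain ⟨l, hl⟩ : ∃ l, s l ≠ 1 := by
      by_contra hc
      push_neg at hc
      have : ∑ l, s l = (i:ℕ) + 1 := by simp [hc]
      have hij' : (i:ℕ) ≠ (j:ℕ) := fun h => hij (Fin.ext h)
      omega
    exact prod_eq_zero_of_ne_one k _ ha hl

lemma Mmat_diag (k : ℕ) [NeZero k] (a : Fin k → ℂ) (i : Fin k) :
    Mmat k a i i = a 0 ^ ((i:ℕ)+1) := by
  have hk : 1 ≤ k := Nat.one_le_iff_ne_zero.mpr (NeZero.ne k)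
  unfold Mmat
  rw [Finset.sum_eq_single_of_mem (fun _ => 1)]
  · rw [Finset.prod_congr rfl (fun l _ => dif_pos (show 1 ≤ 1 ∧ 1 ≤ k from ⟨le_refl 1, hk⟩))]
    trans (∏ _l : Fin ((i:ℕ)+1), a 0)
    · exact Finset.prod_congr rfl fun l _ => congrArg a (Fin.ext (by simp))
    · simp
  · simp [Finset.Nat.mem_antidiagonalTuple]
  · intro s hs hne
    exfalso
    simp only [Finset.mem_filter, Finset.Nat.mem_antidiagonalTuple] at hs
    obtain ⟨hsum, hpos⟩ := hs
    obtain ⟨l, hl⟩ : ∃ l, s l ≠ 1 := by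
      by_contra hc; push_neg at hc; exact hne (funext hc)
    have h2 : 2 ≤ s l := by have := hpos l; omega
    have hlt : (∑ _m : Fin ((i:ℕ)+1), 1) < ∑ m, s m := by
      refine Finset.sum_lt_sum (fun m _ => hpos m) ⟨l, Finset.mem_univ l, ?_⟩
      show 1 < s l
      omega
    simp at hlt
    omega

lemma matOf_row (k : ℕ) [NeZero k] (c : Fin k → ℂ) (j : Fin k) :
    matOf k c 0 j = c j := by
  unfold matOf
  rw [Matrix.sum_apply]
  rw [Finset.sum_eq_single j]
  · simp [Emat]
  · intro s _ hs
    have : Emat k ((s:ℕ)+1) 0 j = 0 := by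
      unfold Emat
      rw [if_neg]
      simp only [Fin.val_zero]
      intro h; exact hs (Fin.ext (by omega))
    rw [Matrix.smul_apply, this, smul_zero]
  · simp

lemma matOf_lower (k : ℕ) (c : Fin k → ℂ) {i j : Fin k} (h : (j : ℕ) < i) :
    matOf k c i j = 0 := by
  unfold matOf
  rw [Matrix.sum_apply]
  apply Finset.sum_eq_zero
  intro s _
  simp [Emat]
  intro h'; omega

lemma mul_entry00 (k : ℕ) [NeZero k] (M N : Matrix (Fin k) (Fin k) ℂ)
    (hN : ∀ p, p ≠ 0 → N p 0 = 0) : (M * N) 0 0 = M 0 0 * N 0 0 := by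
  rw [Matrix.mul_apply]
  exact Finset.sum_eq_single 0 (fun p _ hp => by rw [hN p hp, mul_zero]) (by simp)

lemma conj_entry00 (k : ℕ) [NeZero k] (a : Fin k → ℂ) (ha : a 0 ≠ 0) (c : Fin k → ℂ) :
    ((Mmat k a)⁻¹ * matOf k c * Mmat k a) 0 0 = c 0 := by
  set A := Mmat k a with hA
  set x := matOf k c with hx
  have hdet : IsUnit A.det := by
    have hbt : A.BlockTriangular id := fun i j hij => Mmat_lower k a hij
    rw [Matrix.det_of_upperTriangular hbt]
    refine isUnit_iff_ne_zero.mpr (Finset.prod_ne_zero_iff.mpr fun i _ => ?_)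
    rw [hA, Mmat_diag]
    exact pow_ne_zero _ ha
  have hpos : ∀ p : Fin k, p ≠ 0 → ((0 : Fin k) : ℕ) < (p : ℕ) := by
    intro p hp
    have : (p : ℕ) ≠ 0 := fun h => hp (Fin.ext (by simp [h]))
    simp only [Fin.val_zero]
    omega
  have hA0 : ∀ p, p ≠ 0 → A p 0 = 0 := fun p hp => Mmat_lower k a (hpos p hp)
  have hx0 : ∀ p, p ≠ 0 → x p 0 = 0 := fun p hp => matOf_lower k c (hpos p hp)
  rw [mul_entry00 k _ A hA0, mul_entry00 k _ x hx0]
  have h1 : A⁻¹ 0 0 * A 0 0 = 1 := by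
    rw [← mul_entry00 k A⁻¹ A hA0, Matrix.nonsing_inv_mul A hdet, Matrix.one_apply_eq]
  have hx00 : x 0 0 = c 0 := matOf_row k c 0
  calc A⁻¹ 0 0 * x 0 0 * A 0 0 = (A⁻¹ 0 0 * A 0 0) * x 0 0 := by ring
  _ = c 0 := by rw [h1, one_mul, hx00]

lemma conj_scale (k : ℕ) [NeZero k] (t : ℂ) (ht : t ≠ 0) (c : Fin k → ℂ) (s : Fin k) :
    ((Mmat k (fun i => if i = 0 then t else 0))⁻¹ * matOf k c
        * Mmat k (fun i => if i = 0 then t else 0)) 0 s = c s * t ^ (s : ℕ) := by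
  have hinv : (Matrix.diagonal fun i : Fin k => t ^ ((i:ℕ)+1))⁻¹
      = Matrix.diagonal (fun i : Fin k => (t ^ ((i:ℕ)+1))⁻¹) := by
    apply Matrix.inv_eq_right_inv
    rw [Matrix.diagonal_mul_diagonal]
    have : (fun i : Fin k => t ^ ((i:ℕ)+1) * (t ^ ((i:ℕ)+1))⁻¹) = fun _ => (1:ℂ) := by
      funext i
      exact mul_inv_cancel₀ (pow_ne_zero _ ht)
    rw [this, Matrix.diagonal_one]
  rw [Mmat_single, hinv, Matrix.mul_diagonal, Matrix.diagonal_mul, matOf_row]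
  simp only [Fin.val_zero, pow_one]
  rw [pow_succ]
  field_simp
  ring

/-- Finite generation: the algebra `ℂ[g_k]^{G_k}` of polynomials on `g_k` invariant
under the adjoint action `(A·P)(x) = P(Ad(A⁻¹)x) = P(A⁻¹ x A)` of `G_k` is a finitely
generated ℂ-algebra. -/
theorem invariant_ring_adjoint_fg (k : ℕ) [NeZero k] :
    ∃ (r : ℕ) (f : Fin r → MvPolynomial (Fin k) ℂ),
      (∀ i : Fin r, ∀ A ∈ Gset k, ∀ c : Fin k → ℂ,
          MvPolynomial.eval (coordOf k (A⁻¹ * matOf k c * A)) (f i)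
            = MvPolynomial.eval c (f i)) ∧
      (∀ P : MvPolynomial (Fin k) ℂ,
          (∀ A ∈ Gset k, ∀ c : Fin k → ℂ,
              MvPolynomial.eval (coordOf k (A⁻¹ * matOf k c * A)) P
                = MvPolynomial.eval c P) →
          P ∈ Algebra.adjoin ℂ (Set.range f)) := by
  refine ⟨1, fun _ => MvPolynomial.X 0, ?_, ?_⟩
  · intro i A hA c
    obtain ⟨a, ha, rfl⟩ := hA
    simp only [MvPolynomial.eval_X]
    exact conj_entry00 k a ha c
  · intro P hP
    -- Invariance under the diagonal scaling subgroup `M(t,0,…,0)`.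
    have key : ∀ (c : Fin k → ℂ) (t : ℂ), t ≠ 0 →
        MvPolynomial.eval (fun s : Fin k => c s * t ^ (s : ℕ)) P = MvPolynomial.eval c P := by
      intro c t ht
      have hmem : Mmat k (fun i : Fin k => if i = 0 then t else 0) ∈ Gset k :=
        ⟨_, by simpa using ht, rfl⟩
      have h := hP _ hmem c
      have harg : coordOf k ((Mmat k fun i : Fin k => if i = 0 then t else 0)⁻¹ * matOf k c
            * Mmat k fun i : Fin k => if i = 0 then t else 0)
          = fun s : Fin k => c s * t ^ (s : ℕ) :=
        funext fun s => conj_scale k t ht c s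
      rw [harg] at h
      exact h
    -- Extend to `t = 0` by a one-variable polynomial argument.
    have key0 : ∀ c : Fin k → ℂ,
        MvPolynomial.eval (fun s : Fin k => c s * (0 : ℂ) ^ (s : ℕ)) P
          = MvPolynomial.eval c P := by
      intro c
      set q : Polynomial ℂ := MvPolynomial.eval₂ Polynomial.C
          (fun s : Fin k => Polynomial.C (c s) * Polynomial.X ^ (s : ℕ)) P with hq
      have heval : ∀ t : ℂ,
          q.eval t = MvPolynomial.eval (fun s : Fin k => c s * t ^ (s : ℕ)) P := by
        intro t
        have h1 := MvPolynomial.eval₂_comp_left (Polynomial.evalRingHom t) Polynomial.C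
          (fun s : Fin k => Polynomial.C (c s) * Polynomial.X ^ (s : ℕ)) P
        have hfid : (Polynomial.evalRingHom t).comp Polynomial.C = RingHom.id ℂ := by
          ext x; simp
        rw [hfid] at h1
        have hg : ((Polynomial.evalRingHom t) ∘
            fun s : Fin k => Polynomial.C (c s) * Polynomial.X ^ (s : ℕ))
            = fun s : Fin k => c s * t ^ (s : ℕ) := by
          funext s; simp
        rw [hg, MvPolynomial.eval₂_id] at h1
        exact h1
      have hzero : q - Polynomial.C (MvPolynomial.eval c P) = 0 := by
        apply Polynomial.eq_zero_of_infinite_isRoot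
        apply Set.Infinite.mono (s := ({0}ᶜ : Set ℂ))
        · intro t ht
          have ht' : t ≠ 0 := ht
          show (q - Polynomial.C (MvPolynomial.eval c P)).IsRoot t
          simp only [Polynomial.IsRoot, Polynomial.eval_sub, Polynomial.eval_C]
          rw [heval t, key c t ht', sub_self]
        · exact (Set.finite_singleton (0 : ℂ)).infinite_compl
      have : q.eval 0 = MvPolynomial.eval c P := by
        have := sub_eq_zero.mp hzero
        rw [this, Polynomial.eval_C]
      rw [← this, heval 0]
    -- Conclude that `P` is a polynomial in `X 0`.
    set g : Fin k → MvPolynomial (Fin k) ℂ :=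
      fun i => if i = 0 then MvPolynomial.X 0 else 0 with hg
    have hPQ : MvPolynomial.aeval g P = P := by
      apply MvPolynomial.funext
      intro c
      have h1 : MvPolynomial.eval c (MvPolynomial.aeval g P)
          = MvPolynomial.eval (fun i => MvPolynomial.eval c (g i)) P := by
        have h2 := MvPolynomial.comp_aeval_apply (f := g) (MvPolynomial.aeval c) P
        have h3 : ∀ (d : Fin k → ℂ) (p : MvPolynomial (Fin k) ℂ),
            MvPolynomial.aeval d p = MvPolynomial.eval d p := fun d p =>
          RingHom.congr_fun (MvPolynomial.coe_aeval_eq_eval d) p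
        simp only [h3] at h2
        exact h2
      rw [h1]
      have h4 : (fun i => MvPolynomial.eval c (g i))
          = fun s : Fin k => c s * (0 : ℂ) ^ (s : ℕ) := by
        funext s
        rcases eq_or_ne s 0 with rfl | hs
        · simp [hg]
        · have : (s : ℕ) ≠ 0 := fun h => hs (Fin.ext (by simp [h]))
          simp [hg, hs, zero_pow this]
      rw [h4, key0]
    have hmem : P ∈ (MvPolynomial.aeval g).range := ⟨P, hPQ⟩
    rw [← Algebra.adjoin_range_eq_range_aeval] at hmem
    refine Algebra.adjoin_le ?_ hmem
    rintro y ⟨i, rfl⟩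
    rcases eq_or_ne i 0 with rfl | hi
    · simp only [hg, if_pos rfl]
      exact Algebra.subset_adjoin ⟨0, rfl⟩
    · simp only [hg, if_neg hi]
      exact Subalgebra.zero_mem _
end
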